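/- arXiv:2205.04982 — 3 statements merged into one kernel-verified Lean document; each statement's English description precedes it below -/
import Mathlib

section
/- For any measurable function T : C × X → ℝ, the quantity E_{p(c,x)}[-sp(-T(c,x))] - E_{p(c)p(x)}[sp(T(c,x))], where sp(r) = log(1 + e^r), is a lower bound of the mutual information I(c;x) (for finite discrete c, x). -/
open Real

def IsPMF {S : Type*} [Fintype S] (p : S → ℝ) : Prop :=
  (∀ s, 0 ≤ p s) ∧ ∑ s, p s = 1

noncomputable def margA {A C : Type*} [Fintype A] [Fintype C] (p : A × C → ℝ) (a : A) : ℝ :=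
  ∑ c, p (a, c)

noncomputable def margC {A C : Type*} [Fintype A] [Fintype C] (p : A × C → ℝ) (c : C) : ℝ :=
  ∑ a, p (a, c)

/-- Mutual information of a joint pmf on `A × C` (convention `0 * log _ = 0`). -/
noncomputable def MI {A C : Type*} [Fintype A] [Fintype C] (p : A × C → ℝ) : ℝ :=
  ∑ a, ∑ c, p (a, c) * Real.log (p (a, c) / (margA p a * margC p c))

/-- Shannon entropy of a pmf. -/
noncomputable def entropy {S : Type*} [Fintype S] (q : S → ℝ) : ℝ :=
  -∑ s, q s * Real.log (q s)

/-- Conditional entropy `H(c|a)` for a joint pmf on `A × C`. -/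
noncomputable def condH {A C : Type*} [Fintype A] [Fintype C] (p : A × C → ℝ) : ℝ :=
  -∑ a, ∑ c, p (a, c) * Real.log (p (a, c) / margA p a)

/-- Kullback–Leibler divergence on a finite set (convention `0 * log _ = 0`). -/
noncomputable def KL {S : Type*} [Fintype S] (P Q : S → ℝ) : ℝ :=
  ∑ s, P s * Real.log (P s / Q s)

/-- Jensen–Shannon divergence. -/
noncomputable def JSD {S : Type*} [Fintype S] (P Q : S → ℝ) : ℝ :=
  (1/2) * KL P (fun s => (P s + Q s) / 2) + (1/2) * KL Q (fun s => (P s + Q s) / 2)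

/-- Softplus. -/
noncomputable def sp (r : ℝ) : ℝ := Real.log (1 + Real.exp r)

/-- GAN value function for discriminator `U` on joint `p` with product of marginals. -/
noncomputable def Vgan {A C : Type*} [Fintype A] [Fintype C] (p U : A × C → ℝ) : ℝ :=
  (∑ a, ∑ c, p (a, c) * Real.log (U (a, c))) +
  (∑ a, ∑ c, (margA p a * margC p c) * Real.log (1 - U (a, c)))

lemma dim_pointwise (p q t : ℝ) (hp : 0 ≤ p) (hq : 0 ≤ q) (hpq : 0 < p → 0 < q) :
    p * (-sp (-t)) - q * sp t ≤ p * Real.log (p / q) := by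
  have het : 0 < Real.exp t := Real.exp_pos t
  have h1 : (0:ℝ) < 1 + Real.exp t := by linarith
  set u : ℝ := Real.exp t / (1 + Real.exp t) with hu
  have hu0 : 0 < u := div_pos het h1
  have hu1 : u < 1 := (div_lt_one h1).mpr (by linarith)
  have hsp : sp t = -Real.log (1 - u) := by
    have h2 : 1 - u = 1 / (1 + Real.exp t) := by rw [hu]; field_simp; ring
    rw [h2, sp, Real.log_div one_ne_zero (ne_of_gt h1), Real.log_one]
    ring
  have hnsp : -sp (-t) = Real.log u := by
    have h2 : 1 + Real.exp (-t) = (1 + Real.exp t) / Real.exp t := by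
      rw [Real.exp_neg]; field_simp; ring
    rw [sp, h2, hu, Real.log_div (ne_of_gt h1) (ne_of_gt het),
      Real.log_div (ne_of_gt het) (ne_of_gt h1)]
    ring
  rw [hsp, hnsp]
  rcases eq_or_lt_of_le hp with h | hp0
  · have hlog : Real.log (1 - u) ≤ 0 := Real.log_nonpos (by linarith) (by linarith)
    have := mul_nonneg hq (neg_nonneg.mpr hlog)
    rw [← h]; nlinarith
  · have hq0 := hpq hp0
    have h2 : p * Real.log u - p * Real.log (p / q) = p * Real.log (u * q / p) := by
      rw [Real.log_div (by positivity) (ne_of_gt hp0), Real.log_mul (ne_of_gt hu0) (ne_of_gt hq0),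
        Real.log_div (ne_of_gt hp0) (ne_of_gt hq0)]
      ring
    have h3 : Real.log (u * q / p) ≤ u * q / p - 1 := Real.log_le_sub_one_of_pos (by positivity)
    have h4 : Real.log (1 - u) ≤ (1 - u) - 1 := Real.log_le_sub_one_of_pos (by linarith)
    have h5 : p * Real.log (u * q / p) ≤ u * q - p := by
      have := mul_le_mul_of_nonneg_left h3 hp
      calc p * Real.log (u * q / p) ≤ p * (u * q / p - 1) := this
        _ = u * q - p := by field_simp
    have h6 : q * Real.log (1 - u) ≤ q * (-u) := by
      have := mul_le_mul_of_nonneg_left h4 hq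
      linarith [this]
    nlinarith [h5, h6, h2]

/-- DeepInfomax lower bound on mutual information: for any `T`,
`E_{p(c,x)}[-sp(-T)] - E_{p(c)p(x)}[sp(T)] ≤ I(c;x)`. -/
theorem deep_infomax_lower_bound {C X : Type*} [Fintype C] [Fintype X]
    (p : C × X → ℝ) (hp : IsPMF p)
    (hpos : ∀ c x, 0 < p (c, x) → 0 < margA p c * margC p x)
    (T : C × X → ℝ) :
    (∑ c, ∑ x, p (c, x) * (-sp (-T (c, x)))) -
      (∑ c, ∑ x, (margA p c * margC p x) * sp (T (c, x))) ≤ MI p := by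
  obtain ⟨hnn, _⟩ := hp
  have key : ∀ c x, p (c, x) * (-sp (-T (c, x))) - (margA p c * margC p x) * sp (T (c, x)) ≤
      p (c, x) * Real.log (p (c, x) / (margA p c * margC p x)) := by
    intro c x
    refine dim_pointwise _ _ _ (hnn _) ?_ (hpos c x)
    have h1 : 0 ≤ margA p c := Finset.sum_nonneg fun _ _ => hnn _
    have h2 : 0 ≤ margC p x := Finset.sum_nonneg fun _ _ => hnn _
    positivity
  have hsplit : (∑ c, ∑ x, p (c, x) * (-sp (-T (c, x)))) -
      (∑ c, ∑ x, (margA p c * margC p x) * sp (T (c, x))) =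
      ∑ c, ∑ x, (p (c, x) * (-sp (-T (c, x))) -
        (margA p c * margC p x) * sp (T (c, x))) := by
    rw [← Finset.sum_sub_distrib]
    exact Finset.sum_congr rfl fun c _ => by rw [Finset.sum_sub_distrib]
  rw [hsplit, MI]
  exact Finset.sum_le_sum fun c _ => Finset.sum_le_sum fun x _ => key c x
end

section
/- The Donsker–Varadhan inequality: for finite probability distributions P and Q on a finite set with Q positive, and any function T, KL(P||Q) ≥ E_P[T] - log E_Q[e^T]. -/
open Real

/-- Donsker–Varadhan inequality. -/
theorem donsker_varadhan {S : Type*} [Fintype S]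
    (P Q : S → ℝ) (hP : IsPMF P) (hQ : IsPMF Q) (hQpos : ∀ s, 0 < Q s)
    (T : S → ℝ) :
    (∑ s, P s * T s) - Real.log (∑ s, Q s * Real.exp (T s)) ≤ KL P Q := by
  set Z : ℝ := ∑ s, Q s * Real.exp (T s) with hZdef
  have hne : (Finset.univ : Finset S).Nonempty := by
    by_contra h
    rw [Finset.not_nonempty_iff_eq_empty] at h
    have := hQ.2
    rw [h] at this
    simp at this
  have hZpos : 0 < Z := by
    exact Finset.sum_pos (fun s _ => mul_pos (hQpos s) (Real.exp_pos _)) hne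
  set G : S → ℝ := fun s => Q s * Real.exp (T s) / Z with hGdef
  have hGpos : ∀ s, 0 < G s := fun s =>
    div_pos (mul_pos (hQpos s) (Real.exp_pos _)) hZpos
  -- termwise identity
  have hterm : ∀ s, P s * Real.log (P s / G s)
      = P s * Real.log (P s / Q s) - P s * T s + P s * Real.log Z := by
    intro s
    rcases eq_or_lt_of_le (hP.1 s) with h0 | hpos
    · simp [← h0]
    · have hPne : P s ≠ 0 := ne_of_gt hpos
      have hQne : Q s ≠ 0 := ne_of_gt (hQpos s)
      have hGne : G s ≠ 0 := ne_of_gt (hGpos s)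
      have hZne : Z ≠ 0 := ne_of_gt hZpos
      have : Real.log (P s / G s)
          = Real.log (P s / Q s) - T s + Real.log Z := by
        rw [Real.log_div hPne hGne, Real.log_div hPne hQne, hGdef]
        rw [Real.log_div (mul_ne_zero hQne (Real.exp_ne_zero _)) hZne,
          Real.log_mul hQne (Real.exp_ne_zero _), Real.log_exp]
        ring
      rw [this]; ring
  -- nonnegativity of KL(P || G)
  have hkl : 0 ≤ ∑ s, P s * Real.log (P s / G s) := by
    have hle : ∀ s ∈ Finset.univ, P s - G s ≤ P s * Real.log (P s / G s) := by
      intro s _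
      rcases eq_or_lt_of_le (hP.1 s) with h0 | hpos
      · simp [← h0]
        exact le_of_lt (hGpos s)
      · have h1 : Real.log (G s / P s) ≤ G s / P s - 1 :=
          Real.log_le_sub_one_of_pos (div_pos (hGpos s) hpos)
        have h2 : Real.log (P s / G s) = - Real.log (G s / P s) := by
          rw [← Real.log_inv, inv_div]
        have h3 : 1 - G s / P s ≤ Real.log (P s / G s) := by
          rw [h2]; linarith
        have := mul_le_mul_of_nonneg_left h3 (le_of_lt hpos)
        calc P s - G s = P s * (1 - G s / P s) := by
              field_simp
          _ ≤ P s * Real.log (P s / G s) := this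
    have hsum : (0:ℝ) ≤ ∑ s, (P s - G s) → True := fun _ => trivial
    have hGsum : ∑ s, G s = 1 := by
      rw [hGdef]
      simp only
      rw [← Finset.sum_div, ← hZdef, div_self (ne_of_gt hZpos)]
    have h4 : ∑ s, (P s - G s) ≤ ∑ s, P s * Real.log (P s / G s) :=
      Finset.sum_le_sum hle
    rw [Finset.sum_sub_distrib, hP.2, hGsum] at h4
    linarith
  have hident : ∑ s, P s * Real.log (P s / G s)
      = KL P Q - (∑ s, P s * T s) + Real.log Z := by
    rw [KL]
    rw [show (∑ s, P s * Real.log (P s / G s))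
        = ∑ s, (P s * Real.log (P s / Q s) - P s * T s + P s * Real.log Z) from
      Finset.sum_congr rfl (fun s _ => hterm s)]
    rw [Finset.sum_add_distrib, Finset.sum_sub_distrib, ← Finset.sum_mul, hP.2]
    ring
  rw [hident] at hkl
  linarith
end

section
/- With the optimal discriminator plugged in, the GAN objective equals -log 4 + 2·JSD(p(a,c) || p(a)p(c)), where JSD is the Jensen–Shannon divergence; consequently the minimum over the generator (i.e., over joint distributions with fixed marginals) of max_U V(U) is -log 4, attained exactly when p(a,c) = p(a)p(c). -/
open Real

section Aux
open Finset

lemma pt_le (x m : ℝ) (hx : 0 ≤ x) (hm : 0 ≤ m) (h0 : m = 0 → x = 0) :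
    x - m ≤ x * Real.log (x / m) := by
  rcases hm.eq_or_lt with hm0 | hm0
  · have hx0 := h0 hm0.symm
    simp [hx0, ← hm0]
  rcases hx.eq_or_lt with hx0 | hx0
  · rw [← hx0]; simpa using hm
  · have h1 : Real.log (m / x) ≤ m / x - 1 := Real.log_le_sub_one_of_pos (by positivity)
    have h2 : Real.log (m / x) = -Real.log (x / m) := by rw [← Real.log_inv, inv_div]
    have h3 : 1 - m / x ≤ Real.log (x / m) := by rw [h2] at h1; linarith
    have h4 := mul_le_mul_of_nonneg_left h3 hx
    have h5 : x * (1 - m / x) = x - m := by field_simp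
    linarith

lemma pt_eq (x m : ℝ) (hx : 0 ≤ x) (hm : 0 ≤ m) (h0 : m = 0 → x = 0)
    (heq : x * Real.log (x / m) = x - m) : x = m := by
  by_contra hne
  rcases hm.eq_or_lt with hm0 | hm0
  · exact hne (by rw [h0 hm0.symm, ← hm0])
  rcases hx.eq_or_lt with hx0 | hx0
  · rw [← hx0] at heq hne
    simp at heq
    exact hne heq.symm
  · have hq : m / x ≠ 1 := by
      intro h
      exact hne (by field_simp at h; linarith)
    have h1 : Real.log (m / x) < m / x - 1 :=
      Real.log_lt_sub_one_of_pos (by positivity) hq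
    have h2 : Real.log (m / x) = -Real.log (x / m) := by rw [← Real.log_inv, inv_div]
    have h3 : 1 - m / x < Real.log (x / m) := by rw [h2] at h1; linarith
    have h4 := mul_lt_mul_of_pos_left h3 hx0
    have h5 : x * (1 - m / x) = x - m := by field_simp
    linarith

lemma kl_half {S : Type*} [Fintype S] (P Q : S → ℝ)
    (hP0 : ∀ s, 0 ≤ P s) (hQ0 : ∀ s, 0 ≤ Q s)
    (hP1 : ∑ s, P s = 1) (hQ1 : ∑ s, Q s = 1) :
    0 ≤ KL P (fun s => (P s + Q s) / 2) ∧
    (KL P (fun s => (P s + Q s) / 2) = 0 → ∀ s, P s = (P s + Q s) / 2) := by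
  have key : ∀ s, P s - (P s + Q s) / 2 ≤ P s * Real.log (P s / ((P s + Q s) / 2)) := by
    intro s
    exact pt_le _ _ (hP0 s) (by linarith [hP0 s, hQ0 s]) (by intro h; linarith [hP0 s, hQ0 s])
  have hsum : ∑ s, (P s - (P s + Q s) / 2) = 0 := by
    have : ∀ s, P s - (P s + Q s) / 2 = P s / 2 - Q s / 2 := fun s => by ring
    simp only [this, Finset.sum_sub_distrib, ← Finset.sum_div, hP1, hQ1]
    norm_num
  have hge : 0 ≤ KL P (fun s => (P s + Q s) / 2) := by
    rw [KL, ← hsum]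
    exact Finset.sum_le_sum fun s _ => key s
  refine ⟨hge, fun h s => ?_⟩
  have hz : ∑ s, (P s * Real.log (P s / ((P s + Q s) / 2)) - (P s - (P s + Q s) / 2)) = 0 := by
    rw [Finset.sum_sub_distrib, hsum]
    simpa [KL] using h
  have := (Finset.sum_eq_zero_iff_of_nonneg (fun s _ => by linarith [key s])).mp hz s
    (Finset.mem_univ s)
  exact pt_eq _ _ (hP0 s) (by linarith [hP0 s, hQ0 s]) (by intro h'; linarith [hP0 s, hQ0 s])
    (by linarith)

lemma term_id (x y : ℝ) (hx : 0 ≤ x) (hy : 0 ≤ y) :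
    x * Real.log (x / (x + y)) + y * Real.log (1 - x / (x + y))
      = x * Real.log (x / ((x + y) / 2)) + y * Real.log (y / ((x + y) / 2))
        - (x + y) * Real.log 2 := by
  rcases eq_or_lt_of_le (by linarith : (0:ℝ) ≤ x + y) with hxy | hxy
  · have hx0 : x = 0 := by linarith
    have hy0 : y = 0 := by linarith
    simp [hx0, hy0]
  · have h1 : 1 - x / (x + y) = y / (x + y) := by field_simp; ring
    rw [h1]
    have e1 : x * Real.log (x / ((x + y) / 2)) = x * Real.log (x / (x + y)) + x * Real.log 2 := by
      rcases hx.eq_or_lt with h | h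
      · simp [← h]
      · have hd : x / ((x + y) / 2) = 2 * (x / (x + y)) := by field_simp
        rw [hd, Real.log_mul (by norm_num) (by positivity)]
        ring
    have e2 : y * Real.log (y / ((x + y) / 2)) = y * Real.log (y / (x + y)) + y * Real.log 2 := by
      rcases hy.eq_or_lt with h | h
      · simp [← h]
      · have hd : y / ((x + y) / 2) = 2 * (y / (x + y)) := by field_simp
        rw [hd, Real.log_mul (by norm_num) (by positivity)]
        ring
    rw [e1, e2]; ring

end Aux

/-- with the optimal discriminator, the GAN objective equals
`-log 4 + 2·JSD(p(a,c) || p(a)p(c))`; its minimum over the generator is `-log 4`,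
attained exactly when `p(a,c) = p(a)p(c)` (Theorem 1 of the paper). -/
theorem gan_objective_jsd {A C : Type*} [Fintype A] [Fintype C]
    (p : A × C → ℝ) (hp : IsPMF p) :
    let q : A × C → ℝ := fun x => margA p x.1 * margC p x.2
    let Ustar : A × C → ℝ := fun x => p x / (p x + q x)
    Vgan p Ustar = -Real.log 4 + 2 * JSD p q ∧
    -Real.log 4 ≤ Vgan p Ustar ∧
    (Vgan p Ustar = -Real.log 4 ↔ ∀ a c, p (a, c) = margA p a * margC p c) := by
  intro q Ustar
  obtain ⟨hp0, hp1⟩ := hp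
  have hq0 : ∀ x : A × C, 0 ≤ q x := by
    intro x
    exact mul_nonneg (Finset.sum_nonneg fun c _ => hp0 _) (Finset.sum_nonneg fun a _ => hp0 _)
  have hA : ∑ a, margA p a = 1 := by
    rw [← hp1, Fintype.sum_prod_type]
    rfl
  have hC : ∑ c, margC p c = 1 := by
    rw [← hp1, Fintype.sum_prod_type, Finset.sum_comm]
    rfl
  have hq1 : ∑ x : A × C, q x = 1 := by
    rw [Fintype.sum_prod_type]
    simp only [q]
    calc ∑ a, ∑ c, margA p a * margC p c
        = ∑ a, margA p a * ∑ c, margC p c := by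
          refine Finset.sum_congr rfl fun a _ => ?_
          rw [Finset.mul_sum]
      _ = 1 := by rw [hC]; simpa using hA
  -- rewrite Vgan as a single sum over pairs
  have hVgan : Vgan p Ustar
      = (∑ x : A × C, p x * Real.log (p x / (p x + q x)))
        + (∑ x : A × C, q x * Real.log (1 - p x / (p x + q x))) := by
    simp only [Vgan, Ustar, q, Fintype.sum_prod_type]
  have hKLP := kl_half p q hp0 hq0 hp1 hq1
  have hKLQ' := kl_half q p hq0 hp0 hq1 hp1
  have hswap : (fun s => (q s + p s) / 2) = (fun s : A × C => (p s + q s) / 2) :=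
    funext fun s => by ring
  rw [hswap] at hKLQ'
  set M : A × C → ℝ := fun s => (p s + q s) / 2 with hM
  have hid : Vgan p Ustar = KL p M + KL q M - 2 * Real.log 2 := by
    rw [hVgan, ← Finset.sum_add_distrib]
    have hterm : ∀ x : A × C,
        p x * Real.log (p x / (p x + q x)) + q x * Real.log (1 - p x / (p x + q x))
          = p x * Real.log (p x / M x) + q x * Real.log (q x / M x)
            - (p x + q x) * Real.log 2 := fun x => term_id _ _ (hp0 x) (hq0 x)
    rw [Finset.sum_congr rfl fun x _ => hterm x]
    rw [Finset.sum_sub_distrib, Finset.sum_add_distrib, ← Finset.sum_mul,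
      Finset.sum_add_distrib, hp1, hq1]
    simp only [KL]
    ring
  have hlog4 : Real.log 4 = 2 * Real.log 2 := by
    rw [show (4:ℝ) = 2 ^ 2 by norm_num, Real.log_pow]
    norm_num
  have hJSD : JSD p q = (1/2) * KL p M + (1/2) * KL q M := rfl
  have hVeq : Vgan p Ustar = -Real.log 4 + 2 * JSD p q := by
    rw [hid, hJSD, hlog4]; ring
  have hJ0 : 0 ≤ JSD p q := by
    rw [hJSD]; linarith [hKLP.1, hKLQ'.1]
  refine ⟨hVeq, by rw [hVeq]; linarith, ?_⟩
  rw [hVeq]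
  constructor
  · intro h
    have hJz : JSD p q = 0 := by linarith
    have hKp : KL p M = 0 := by
      rw [hJSD] at hJz
      linarith [hKLP.1, hKLQ'.1]
    intro a c
    have := hKLP.2 hKp (a, c)
    have hqac : q (a, c) = margA p a * margC p c := rfl
    rw [← hqac]
    linarith
  · intro h
    have hpq : ∀ s : A × C, q s = p s := by
      rintro ⟨a, c⟩
      exact (h a c).symm
    have hKp : KL p M = 0 := by
      rw [KL]
      refine Finset.sum_eq_zero fun s _ => ?_
      rcases eq_or_ne (p s) 0 with h0 | h0
      · simp [h0]
      · have : p s / M s = 1 := by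
          simp only [hM, hpq s]
          field_simp; norm_num
        rw [this]
        simp
    have hKq : KL q M = 0 := by
      rw [KL]
      refine Finset.sum_eq_zero fun s _ => ?_
      rcases eq_or_ne (q s) 0 with h0 | h0
      · simp [h0]
      · have : q s / M s = 1 := by
          simp only [hM, hpq s]
          have : p s ≠ 0 := by rw [← hpq s]; exact h0
          field_simp; norm_num
        rw [this]
        simp
    rw [hJSD, hKp, hKq]
    ring
end
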